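/- Let f(x) = ax/((a−1)x+1) and g(x) = bx/((b−1)x+1) on [0,1] with a, b > 0. The orbit of any x ∈ (0,1) under the semigroup generated by f and g is dense in [0,1] if and only if (a > 1 > b or b > 1 > a) and log b / log a is irrational. -/

import Mathlib

open Real Set

lemma small_comb (α γ : ℝ) (hα : 0 < α) (hγ : 0 < γ) (hθ : Irrational (α / γ))
    (δ : ℝ) (hδ : 0 < δ) (hδα : δ ≤ α) :
    ∃ (d : ℕ) (e : ℕ), 1 ≤ d ∧ 1 ≤ e ∧ ((d:ℝ)*α - e*γ ≠ 0) ∧ |(d:ℝ)*α - e*γ| < δ := by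
  set θ := α / γ with hθdef
  set u : ℕ → ℝ := fun m => Int.fract (m * θ) with hu
  have hγθ : γ * θ = α := by rw [hθdef]; field_simp
  have u_inj : Function.Injective u := by
    intro m1 m2 h
    by_contra hne
    have ⟨z, hz⟩ := Int.fract_eq_fract.mp h
    have hmm : ((m1:ℝ) - m2) ≠ 0 := by
      intro h0
      exact hne (by exact_mod_cast sub_eq_zero.mp h0)
    apply hθ
    refine ⟨(z : ℚ) / ((m1:ℚ) - m2), ?_⟩
    have h2 : ((m1:ℝ) - m2) * θ = z := by rw [sub_mul]; exact hz
    push_cast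
    rw [div_eq_iff hmm]
    linarith [h2]
  set ρ : ℝ := δ / γ with hρdef
  have hρ : 0 < ρ := by positivity
  obtain ⟨K, hK⟩ := exists_nat_gt (1 / ρ)
  have hfin : ∀ m : ℕ, (⌊u m / ρ⌋).toNat < K + 1 := by
    intro m
    have h2 : u m < 1 := Int.fract_lt_one _
    have h0 : (0:ℝ) ≤ u m := Int.fract_nonneg _
    have h1 : u m / ρ < (K:ℝ) + 1 := by
      have h3 : u m / ρ ≤ 1 / ρ := by gcongr
      linarith
    have h4 : ⌊u m / ρ⌋ < (K:ℤ) + 1 := Int.floor_lt.mpr (by push_cast; linarith)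
    omega
  obtain ⟨m1, m2, hne, heq⟩ :=
    Finite.exists_ne_map_eq_of_infinite (fun m : ℕ => (⟨(⌊u m / ρ⌋).toNat, hfin m⟩ : Fin (K+1)))
  -- wlog m1 < m2
  wlog hlt : m1 < m2 generalizing m1 m2
  · exact this m2 m1 hne.symm heq.symm (by omega)
  have hfl : ⌊u m1 / ρ⌋ = ⌊u m2 / ρ⌋ := by
    have h1 : (⌊u m1 / ρ⌋).toNat = (⌊u m2 / ρ⌋).toNat := by
      simpa using congrArg Fin.val heq
    have p1 : 0 ≤ ⌊u m1 / ρ⌋ := Int.floor_nonneg.mpr (div_nonneg (Int.fract_nonneg _) hρ.le)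
    have p2 : 0 ≤ ⌊u m2 / ρ⌋ := Int.floor_nonneg.mpr (div_nonneg (Int.fract_nonneg _) hρ.le)
    omega
  have hclose : |u m2 - u m1| < ρ := by
    have l1 := Int.floor_le (u m1 / ρ)
    have l2 := Int.lt_floor_add_one (u m1 / ρ)
    have l3 := Int.floor_le (u m2 / ρ)
    have l4 := Int.lt_floor_add_one (u m2 / ρ)
    rw [hfl] at l1 l2
    have hd : |u m2 / ρ - u m1 / ρ| < 1 := by rw [abs_lt]; constructor <;> linarith
    have he : u m2 - u m1 = (u m2 / ρ - u m1 / ρ) * ρ := by field_simp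
    rw [he, abs_mul, abs_of_pos hρ]
    nlinarith [abs_nonneg (u m2 / ρ - u m1 / ρ)]
  -- now build d, e
  set e' : ℤ := ⌊(m2:ℝ) * θ⌋ - ⌊(m1:ℝ) * θ⌋ with he'
  set s : ℝ := γ * u m2 - γ * u m1 with hs
  have hsval : s = ((m2:ℝ) - m1) * α - (e':ℝ) * γ := by
    rw [hs, hu]
    simp only [Int.fract, he']
    push_cast
    linear_combination ((m2:ℝ) - m1) * hγθ
  have habs : |s| < δ := by
    rw [hs, ← mul_sub, abs_mul, abs_of_pos hγ]
    calc γ * |u m2 - u m1| < γ * ρ := by exact (mul_lt_mul_iff_right₀ hγ).mpr hclose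
    _ = δ := by rw [hρdef]; field_simp
  have hne0 : s ≠ 0 := by
    rw [hs, ← mul_sub]
    exact mul_ne_zero hγ.ne' (sub_ne_zero.mpr (fun h => hne.symm (u_inj h)))
  have hm21 : (1:ℝ) ≤ (m2:ℝ) - m1 := by
    have : (m1:ℝ) + 1 ≤ m2 := by exact_mod_cast hlt
    linarith
  have he'pos : 0 < e' := by
    have h1 : (0:ℝ) < (e':ℝ) * γ := by
      have : s < δ := (abs_lt.mp habs).2
      nlinarith
    have : (0:ℝ) < (e':ℝ) := by
      by_contra hc
      push_neg at hc
      nlinarith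
    exact_mod_cast this
  refine ⟨m2 - m1, e'.toNat, by omega, by omega, ?_, ?_⟩
  · have hc1 : ((m2 - m1 : ℕ) : ℝ) = (m2:ℝ) - m1 := by
      push_cast [Nat.cast_sub hlt.le]; ring
    have hc2 : ((e'.toNat : ℕ) : ℝ) = (e':ℝ) := by
      exact_mod_cast Int.toNat_of_nonneg he'pos.le
    rw [hc1, hc2, ← hsval]
    exact hne0
  · have hc1 : ((m2 - m1 : ℕ) : ℝ) = (m2:ℝ) - m1 := by
      push_cast [Nat.cast_sub hlt.le]; ring
    have hc2 : ((e'.toNat : ℕ) : ℝ) = (e':ℝ) := by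
      exact_mod_cast Int.toNat_of_nonneg he'pos.le
    rw [hc1, hc2, ← hsval]
    exact habs

set_option maxHeartbeats 2000000 in
lemma dense_semigroup (α β : ℝ) (hα : 0 < α) (hβ : β < 0) (hirr : Irrational (β / α)) :
    Dense {c : ℝ | ∃ m n : ℕ, 1 ≤ m + n ∧ c = m * α + n * β} := by
  set S := {c : ℝ | ∃ m n : ℕ, 1 ≤ m + n ∧ c = m * α + n * β} with hS
  obtain ⟨γ, hγdef⟩ : ∃ γ : ℝ, γ = -β := ⟨-β, rfl⟩
  have hγ : 0 < γ := by rw [hγdef]; linarith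
  have hθ : Irrational (α / γ) := by
    have h1 : Irrational (α / β) := by
      have := hirr.inv
      rwa [inv_div] at this
    have h2 := h1.neg
    rw [hγdef, div_neg]
    exact h2
  -- rationality helper
  have hrat : ∀ (p q : ℕ), 0 < p → (p:ℝ) * α = q * γ → False := by
    intro p q hp h
    apply hθ
    refine ⟨(q:ℚ) / (p:ℚ), ?_⟩
    have hp' : ((p:ℝ)) ≠ 0 := by positivity
    push_cast
    rw [div_eq_div_iff hp' hγ.ne']
    linarith
  -- small positive and negative elements
  have key : ∀ ε : ℝ, 0 < ε → (∃ c ∈ S, 0 < c ∧ c < ε) ∧ (∃ c ∈ S, -ε < c ∧ c < 0) := by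
    intro ε hε
    obtain ⟨δ, hδdef⟩ : ∃ δ : ℝ, δ = min (min α γ) ε := ⟨_, rfl⟩
    have hδ : 0 < δ := by rw [hδdef]; positivity
    have hδα : δ ≤ α := hδdef ▸ (min_le_left _ _).trans (min_le_left _ _)
    have hδγ : δ ≤ γ := hδdef ▸ (min_le_left _ _).trans (min_le_right _ _)
    have hδε : δ ≤ ε := hδdef ▸ min_le_right _ _
    obtain ⟨d, e, hd, he, hne0, habs⟩ := small_comb α γ hα hγ hθ δ hδ hδα
    obtain ⟨s, hs⟩ : ∃ s : ℝ, s = (d:ℝ) * α - e * γ := ⟨_, rfl⟩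
    rw [← hs] at hne0 habs
    have hsmem : s ∈ S := ⟨d, e, by omega, by rw [hs, hγdef]; ring⟩
    rcases lt_or_gt_of_ne hne0 with hneg | hpos
    · -- s < 0 : s is the small negative element; build positive one
      have hslt : -s < δ := by have := (abs_lt.mp habs).1; linarith
      have hsd : 0 < -s := by linarith
      have hk1 : (1:ℝ) < α / (-s) := by
        rw [lt_div_iff₀ hsd]; linarith
      obtain ⟨k, hk⟩ : ∃ k : ℕ, k = (⌊α / (-s)⌋).toNat := ⟨_, rfl⟩
      have hkfl : (k:ℝ) = ⌊α / (-s)⌋ := by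
        have : (0:ℤ) ≤ ⌊α / (-s)⌋ := Int.floor_nonneg.mpr (by linarith)
        rw [hk]; exact_mod_cast Int.toNat_of_nonneg this
      have hk1' : 1 ≤ k := by
        have : (1:ℤ) ≤ ⌊α / (-s)⌋ := by
          rw [Int.le_floor]; exact_mod_cast hk1.le
        omega
      have hlb : (k:ℝ) ≤ α / (-s) := by rw [hkfl]; exact Int.floor_le _
      have hub : α / (-s) < (k:ℝ) + 1 := by rw [hkfl]; exact Int.lt_floor_add_one (α / (-s))
      have hlb' : (k:ℝ) * (-s) ≤ α := by
        rw [← le_div_iff₀ hsd]; exact hlb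
      have hub' : α < ((k:ℝ) + 1) * (-s) := by
        rw [← div_lt_iff₀ hsd]; exact hub
      obtain ⟨c, hc⟩ : ∃ c : ℝ, c = α + k * s := ⟨_, rfl⟩
      have hcmem : c ∈ S := by
        refine ⟨1 + k * d, k * e, by omega, ?_⟩
        rw [hc, hs, hγdef]; push_cast; ring
      have hx : ((k:ℝ)+1)*(-s) = k*(-s) - s := by ring
      have hc0 : 0 ≤ c := by rw [hc]; nlinarith
      have hcu : c < -s := by rw [hc]; nlinarith
      have hcne : c ≠ 0 := by
        intro h0
        apply hrat (1 + k * d) (k * e) (by omega)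
        have : α + (k:ℝ) * ((d:ℝ)*α - e*γ) = 0 := by rw [← hs, ← hc]; exact h0
        push_cast
        nlinarith [this]
      refine ⟨⟨c, hcmem, lt_of_le_of_ne hc0 (Ne.symm hcne), by linarith⟩,
              ⟨s, hsmem, by linarith, hneg⟩⟩
    · -- s > 0 : s is the small positive element; build negative one
      have hslt : s < δ := by have := (abs_lt.mp habs).2; linarith
      have hk1 : (1:ℝ) < γ / s := by
        rw [lt_div_iff₀ hpos]; linarith
      obtain ⟨k, hk⟩ : ∃ k : ℕ, k = (⌊γ / s⌋).toNat := ⟨_, rfl⟩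
      have hkfl : (k:ℝ) = ⌊γ / s⌋ := by
        have : (0:ℤ) ≤ ⌊γ / s⌋ := Int.floor_nonneg.mpr (by positivity)
        rw [hk]; exact_mod_cast Int.toNat_of_nonneg this
      have hk1' : 1 ≤ k := by
        have : (1:ℤ) ≤ ⌊γ / s⌋ := by
          rw [Int.le_floor]; exact_mod_cast hk1.le
        omega
      have hlb : (k:ℝ) ≤ γ / s := by rw [hkfl]; exact Int.floor_le _
      have hub : γ / s < (k:ℝ) + 1 := by rw [hkfl]; exact Int.lt_floor_add_one (γ / s)
      have hlb' : (k:ℝ) * s ≤ γ := by rw [← le_div_iff₀ hpos]; exact hlb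
      have hub' : γ < ((k:ℝ) + 1) * s := by rw [← div_lt_iff₀ hpos]; exact hub
      obtain ⟨c, hc⟩ : ∃ c : ℝ, c = β + k * s := ⟨_, rfl⟩
      have hcmem : c ∈ S := by
        refine ⟨k * d, 1 + k * e, by omega, ?_⟩
        rw [hc, hs, hγdef]; push_cast; ring
      have hβγ : β = -γ := by rw [hγdef]; ring
      have hc0 : c ≤ 0 := by rw [hc, hβγ]; linarith
      have hcl : -s < c := by
        have hx : ((k:ℝ)+1)*s = k*s + s := by ring
        rw [hc, hβγ]; linarith
      have hcne : c ≠ 0 := by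
        intro h0
        apply hrat (k * d) (1 + k * e) (by positivity)
        have : β + (k:ℝ) * ((d:ℝ)*α - e*γ) = 0 := by rw [← hs, ← hc]; exact h0
        push_cast
        rw [hγdef] at this ⊢
        nlinarith [this]
      refine ⟨⟨s, hsmem, hpos, by linarith⟩,
              ⟨c, hcmem, by linarith, lt_of_le_of_ne hc0 hcne⟩⟩
  -- density
  rw [Metric.dense_iff]
  intro x ε hε
  obtain ⟨⟨p, hpS, hp0, hpε⟩, ⟨q, hqS, hqε, hq0⟩⟩ := key ε hε
  rcases le_or_gt 0 x with hx | hx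
  · -- use p
    obtain ⟨k, hk⟩ : ∃ k : ℕ, k = (⌊x / p⌋).toNat + 1 := ⟨_, rfl⟩
    have hfl0 : (0:ℤ) ≤ ⌊x / p⌋ := Int.floor_nonneg.mpr (by positivity)
    have hkz : (k:ℤ) = ⌊x / p⌋ + 1 := by rw [hk]; omega
    have hkfl : (k:ℝ) = (⌊x / p⌋ : ℝ) + 1 := by exact_mod_cast hkz
    have h1 : x / p < (k:ℝ) := by rw [hkfl]; exact Int.lt_floor_add_one _
    have h2 : (k:ℝ) - 1 ≤ x / p := by rw [hkfl]; simpa using Int.floor_le (x / p)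
    have hxk : x < k * p := by rw [div_lt_iff₀ hp0] at h1; linarith
    have hxk2 : (k:ℝ) * p ≤ x + p := by
      rw [← sub_le_iff_le_add']
      have := (le_div_iff₀ hp0).mp h2
      nlinarith
    obtain ⟨m, n, hmn, hc⟩ := hpS
    refine ⟨(k:ℝ) * p, ?_, ?_⟩
    · rw [Metric.mem_ball, Real.dist_eq, abs_lt]
      constructor <;> nlinarith
    · refine ⟨k * m, k * n, ?_, by rw [hc]; push_cast; ring⟩
      have hk1 : 1 ≤ k := by omega
      calc 1 = 1 * 1 := rfl
      _ ≤ k * (m + n) := Nat.mul_le_mul hk1 hmn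
      _ = k * m + k * n := Nat.mul_add k m n
  · -- use q
    obtain ⟨k, hk⟩ : ∃ k : ℕ, k = (⌊x / q⌋).toNat + 1 := ⟨_, rfl⟩
    have hfl0 : (0:ℤ) ≤ ⌊x / q⌋ := Int.floor_nonneg.mpr (div_nonneg_of_nonpos hx.le hq0.le)
    have hkz : (k:ℤ) = ⌊x / q⌋ + 1 := by rw [hk]; omega
    have hkfl : (k:ℝ) = (⌊x / q⌋ : ℝ) + 1 := by exact_mod_cast hkz
    have h1 : x / q < (k:ℝ) := by rw [hkfl]; exact Int.lt_floor_add_one _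
    have h2 : (k:ℝ) - 1 ≤ x / q := by rw [hkfl]; simpa using Int.floor_le (x / q)
    have hxk : (k:ℝ) * q < x := by
      rw [div_lt_iff_of_neg hq0] at h1; linarith
    have hxk2 : x + q ≤ (k:ℝ) * q := by
      have := (le_div_iff_of_neg hq0).mp h2
      nlinarith
    obtain ⟨m, n, hmn, hc⟩ := hqS
    refine ⟨(k:ℝ) * q, ?_, ?_⟩
    · rw [Metric.mem_ball, Real.dist_eq, abs_lt]
      constructor <;> nlinarith
    · refine ⟨k * m, k * n, ?_, by rw [hc]; push_cast; ring⟩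
      have hk1 : 1 ≤ k := by omega
      calc 1 = 1 * 1 := rfl
      _ ≤ k * (m + n) := Nat.mul_le_mul hk1 hmn
      _ = k * m + k * n := Nat.mul_add k m n


noncomputable def psiST (t : ℝ) : ℝ := Real.exp t / (1 + Real.exp t)
noncomputable def phiST (x : ℝ) : ℝ := Real.log (x / (1 - x))

lemma psiST_mem (t : ℝ) : psiST t ∈ Ioo (0:ℝ) 1 := by
  have h := Real.exp_pos t
  constructor
  · rw [psiST]; positivity
  · rw [psiST, div_lt_one (by linarith)]; linarith

lemma phiST_psiST (t : ℝ) : phiST (psiST t) = t := by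
  have h := Real.exp_pos t
  rw [phiST, psiST]
  have h1 : (1:ℝ) - Real.exp t / (1 + Real.exp t) = 1 / (1 + Real.exp t) := by
    field_simp
    ring
  rw [h1]
  have h2 : Real.exp t / (1 + Real.exp t) / (1 / (1 + Real.exp t)) = Real.exp t := by
    field_simp
  rw [h2, Real.log_exp]

lemma psiST_phiST {x : ℝ} (hx : x ∈ Ioo (0:ℝ) 1) : psiST (phiST x) = x := by
  obtain ⟨h0, h1⟩ := hx
  have hx1 : (0:ℝ) < 1 - x := by linarith
  rw [psiST, phiST, Real.exp_log (by positivity)]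
  field_simp
  ring

lemma psiST_cont : Continuous psiST := by
  apply Continuous.div Real.continuous_exp (continuous_const.add Real.continuous_exp)
  intro t
  have := Real.exp_pos t
  exact (by linarith : (0:ℝ) < 1 + Real.exp t).ne'

lemma phiST_contAt {x : ℝ} (hx : x ∈ Ioo (0:ℝ) 1) : ContinuousAt phiST x := by
  obtain ⟨h0, h1⟩ := hx
  have hx1 : (0:ℝ) < 1 - x := by linarith
  have hq : ContinuousAt (fun y : ℝ => y / (1 - y)) x := by
    apply ContinuousAt.div continuousAt_id
    · exact (continuous_const.sub continuous_id).continuousAt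
    · exact hx1.ne'
  have hl : ContinuousAt Real.log ((fun y : ℝ => y / (1 - y)) x) :=
    Real.continuousAt_log (by positivity)
  have : ContinuousAt (Real.log ∘ fun y : ℝ => y / (1 - y)) x :=
    ContinuousAt.comp (g := Real.log) (f := fun y : ℝ => y / (1 - y)) hl hq
  exact this

lemma stepST_mem {a z : ℝ} (ha : 0 < a) (hz : z ∈ Ioo (0:ℝ) 1) :
    a * z / ((a - 1) * z + 1) ∈ Ioo (0:ℝ) 1 := by
  obtain ⟨h0, h1⟩ := hz
  have hD : 0 < (a - 1) * z + 1 := by nlinarith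
  constructor
  · positivity
  · rw [div_lt_one hD]; nlinarith

lemma stepST_phiST {a z : ℝ} (ha : 0 < a) (hz : z ∈ Ioo (0:ℝ) 1) :
    phiST (a * z / ((a - 1) * z + 1)) = Real.log a + phiST z := by
  obtain ⟨h0, h1⟩ := hz
  have hz1 : (0:ℝ) < 1 - z := by linarith
  have hD : 0 < (a - 1) * z + 1 := by nlinarith
  have h2 : 1 - a * z / ((a - 1) * z + 1) = (1 - z) / ((a - 1) * z + 1) := by
    rw [eq_div_iff hD.ne', sub_mul, div_mul_cancel₀ _ hD.ne']; ring
  have key : a * z / ((a - 1) * z + 1) / (1 - a * z / ((a - 1) * z + 1))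
      = a * (z / (1 - z)) := by
    rw [h2]
    field_simp
    exact div_self (ne_of_gt (by nlinarith))
  rw [phiST, key, Real.log_mul ha.ne' (by positivity), phiST]

section main
variable {a b : ℝ} {f g : ℝ → ℝ}

lemma orbit_fold (ha : 0 < a) (hb : 0 < b)
    (hf : ∀ x : ℝ, f x = a * x / ((a - 1) * x + 1))
    (hg : ∀ x : ℝ, g x = b * x / ((b - 1) * x + 1))
    {x : ℝ} (hx : x ∈ Ioo (0:ℝ) 1) (w : List Bool) :
    (w.foldr (fun s z => if s then f z else g z) x) ∈ Ioo (0:ℝ) 1 ∧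
      ∃ m n : ℕ, m + n = w.length ∧
        phiST (w.foldr (fun s z => if s then f z else g z) x)
          = phiST x + m * Real.log a + n * Real.log b := by
  induction w with
  | nil => exact ⟨hx, 0, 0, rfl, by simp⟩
  | cons s t ih =>
    obtain ⟨hmem, m, n, hlen, hphi⟩ := ih
    rcases s with _ | _
    · have hzz : ((false :: t).foldr (fun s z => if s then f z else g z) x)
          = g (t.foldr (fun s z => if s then f z else g z) x) := rfl
      refine ⟨?_, m, n + 1, by simp only [List.length_cons]; omega, ?_⟩
      · rw [hzz, hg]; exact stepST_mem hb hmem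
      · rw [hzz, hg, stepST_phiST hb hmem, hphi]; push_cast; ring
    · have hzz : ((true :: t).foldr (fun s z => if s then f z else g z) x)
          = f (t.foldr (fun s z => if s then f z else g z) x) := rfl
      refine ⟨?_, m + 1, n, by simp only [List.length_cons]; omega, ?_⟩
      · rw [hzz, hf]; exact stepST_mem ha hmem
      · rw [hzz, hf, stepST_phiST ha hmem, hphi]; push_cast; ring

lemma repl_fold (ha : 0 < a) (hb : 0 < b)
    (hf : ∀ x : ℝ, f x = a * x / ((a - 1) * x + 1))
    (hg : ∀ x : ℝ, g x = b * x / ((b - 1) * x + 1))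
    {x : ℝ} (hx : x ∈ Ioo (0:ℝ) 1) (m n : ℕ) :
    ((List.replicate m true ++ List.replicate n false).foldr
        (fun s z => if s then f z else g z) x) ∈ Ioo (0:ℝ) 1 ∧
      phiST ((List.replicate m true ++ List.replicate n false).foldr
        (fun s z => if s then f z else g z) x)
          = phiST x + m * Real.log a + n * Real.log b := by
  rw [List.foldr_append]
  have inner : ∀ k : ℕ, ((List.replicate k false).foldr
      (fun s z => if s then f z else g z) x) ∈ Ioo (0:ℝ) 1 ∧
      phiST ((List.replicate k false).foldr (fun s z => if s then f z else g z) x)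
        = phiST x + k * Real.log b := by
    intro k
    induction k with
    | zero => exact ⟨hx, by simp⟩
    | succ k ih =>
      obtain ⟨hmem, hphi⟩ := ih
      rw [List.replicate_succ]
      have hzz : ((false :: List.replicate k false).foldr
            (fun s z => if s then f z else g z) x)
          = g ((List.replicate k false).foldr (fun s z => if s then f z else g z) x) := rfl
      rw [hzz, hg]
      exact ⟨stepST_mem hb hmem,
        by rw [stepST_phiST hb hmem, hphi]; push_cast; ring⟩
  obtain ⟨hmem0, hphi0⟩ := inner n
  induction m with
  | zero =>
    refine ⟨by simpa using hmem0, ?_⟩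
    simp only [List.replicate_zero, List.foldr_nil, Nat.cast_zero]
    rw [hphi0]; ring
  | succ m ih =>
    obtain ⟨hmem1, hphi1⟩ := ih
    rw [List.replicate_succ]
    have hzz : ((true :: List.replicate m true).foldr (fun s z => if s then f z else g z)
          ((List.replicate n false).foldr (fun s z => if s then f z else g z) x))
        = f ((List.replicate m true).foldr (fun s z => if s then f z else g z)
          ((List.replicate n false).foldr (fun s z => if s then f z else g z) x)) := rfl
    rw [hzz, hf]
    exact ⟨stepST_mem ha hmem1,
      by rw [stepST_phiST ha hmem1, hphi1]; push_cast; ring⟩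

end main

set_option maxHeartbeats 1000000 in
/-- for f(x) = ax/((a−1)x+1) and g(x) = bx/((b−1)x+1) on [0,1],
orbits in (0,1) are dense iff (a > 1 > b or b > 1 > a) and log b / log a is
irrational. -/
theorem stmt_10 (a b : ℝ) (ha : 0 < a) (hb : 0 < b)
    (f g : ℝ → ℝ)
    (hf : ∀ x : ℝ, f x = a * x / ((a - 1) * x + 1))
    (hg : ∀ x : ℝ, g x = b * x / ((b - 1) * x + 1)) :
    (∀ x ∈ Set.Ioo (0:ℝ) 1, Set.Icc (0:ℝ) 1 ⊆
        closure {y | ∃ w : List Bool, w ≠ [] ∧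
          y = w.foldr (fun s z => if s then f z else g z) x})
      ↔ (((1 < a ∧ b < 1) ∨ (1 < b ∧ a < 1)) ∧
          Irrational (Real.log b / Real.log a)) := by
  have hx2 : (1/2 : ℝ) ∈ Ioo (0:ℝ) 1 := by norm_num
  set S := {c : ℝ | ∃ m n : ℕ, 1 ≤ m + n ∧ c = m * Real.log a + n * Real.log b} with hS
  have horb : ∀ x, x ∈ Ioo (0:ℝ) 1 →
      {y | ∃ w : List Bool, w ≠ [] ∧
          y = w.foldr (fun s z => if s then f z else g z) x}
        = (fun c => psiST (phiST x + c)) '' S := by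
    intro x hx
    ext y
    constructor
    · rintro ⟨w, hw, rfl⟩
      obtain ⟨hmem, m, n, hlen, hphi⟩ := orbit_fold ha hb hf hg hx w
      refine ⟨(m:ℝ) * Real.log a + n * Real.log b, ⟨m, n, ?_, rfl⟩, ?_⟩
      · have hl : w.length ≠ 0 := by simpa using hw
        omega
      · show psiST (phiST x + ((m:ℝ) * Real.log a + n * Real.log b)) = _
        rw [eq_comm]
        rw [show phiST x + ((m:ℝ) * Real.log a + n * Real.log b)
            = phiST x + m * Real.log a + n * Real.log b from by ring,
          ← hphi, psiST_phiST hmem]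
    · rintro ⟨c, ⟨m, n, hmn, rfl⟩, rfl⟩
      obtain ⟨hmem, hphi⟩ := repl_fold ha hb hf hg hx m n
      refine ⟨List.replicate m true ++ List.replicate n false, ?_, ?_⟩
      · have hl : (List.replicate m true ++ List.replicate n false).length = m + n := by
          simp
        intro hnil
        rw [hnil] at hl
        simp at hl
        omega
      · show psiST (phiST x + ((m:ℝ) * Real.log a + n * Real.log b)) = _
        rw [show phiST x + ((m:ℝ) * Real.log a + n * Real.log b)
            = phiST x + m * Real.log a + n * Real.log b from by ring,
          ← hphi, psiST_phiST hmem]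
  have hiff1 : (∀ x ∈ Set.Ioo (0:ℝ) 1, Set.Icc (0:ℝ) 1 ⊆
        closure {y | ∃ w : List Bool, w ≠ [] ∧
          y = w.foldr (fun s z => if s then f z else g z) x}) ↔ Dense S := by
    constructor
    · intro h t
      have h1 : psiST (phiST (1/2) + t) ∈ closure {y | ∃ w : List Bool, w ≠ [] ∧
          y = w.foldr (fun s z => if s then f z else g z) (1/2 : ℝ)} :=
        h (1/2) hx2 (Ioo_subset_Icc_self (psiST_mem _))
      rw [horb _ hx2] at h1
      have h2 := mem_closure_image (phiST_contAt (psiST_mem _)) h1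
      rw [phiST_psiST] at h2
      have himg : phiST '' ((fun c => psiST (phiST (1/2 : ℝ) + c)) '' S)
          = (fun c => phiST (1/2 : ℝ) + c) '' S := by
        rw [← Set.image_comp]
        apply Set.image_congr
        intro c _
        simp [Function.comp, phiST_psiST]
      rw [himg] at h2
      have h3 := (Homeomorph.addLeft (phiST (1/2 : ℝ))).image_closure S
      have h4 : ((Homeomorph.addLeft (phiST (1/2 : ℝ))) '' S : Set ℝ)
          = (fun c => phiST (1/2 : ℝ) + c) '' S := rfl
      rw [h4] at h3
      rw [← h3] at h2
      obtain ⟨u, hu, huv⟩ := h2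
      have : u = t := by
        have : phiST (1/2 : ℝ) + u = phiST (1/2 : ℝ) + t := huv
        linarith
      rwa [← this]
    · intro hD x hx
      have hsub : Ioo (0:ℝ) 1 ⊆ closure {y | ∃ w : List Bool, w ≠ [] ∧
          y = w.foldr (fun s z => if s then f z else g z) x} := by
        intro p hp
        have h1 : phiST p ∈ closure ((fun c => phiST x + c) '' S) := by
          have h3 := (Homeomorph.addLeft (phiST x)).image_closure S
          rw [hD.closure_eq, Set.image_univ,
            (Homeomorph.addLeft (phiST x)).surjective.range_eq] at h3
          have h4 : ((Homeomorph.addLeft (phiST x)) '' S : Set ℝ)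
              = (fun c => phiST x + c) '' S := rfl
          rw [h4] at h3
          rw [← h3]
          trivial
        have h2 := mem_closure_image psiST_cont.continuousAt h1
        rw [psiST_phiST hp] at h2
        have himg : psiST '' ((fun c => phiST x + c) '' S)
            = (fun c => psiST (phiST x + c)) '' S := by
          rw [← Set.image_comp]; rfl
        rw [himg, ← horb x hx] at h2
        exact h2
      intro y hy
      rw [show Icc (0:ℝ) 1 = closure (Ioo (0:ℝ) 1) from (closure_Ioo (by norm_num)).symm] at hy
      exact closure_minimal hsub isClosed_closure hy
  rw [hiff1]
  constructor
  · intro hD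
    have hsigns : (1 < a ∧ b < 1) ∨ (1 < b ∧ a < 1) := by
      by_contra hns
      push_neg at hns
      obtain ⟨h1, h2⟩ := hns
      have hcase : (a ≤ 1 ∧ b ≤ 1) ∨ (1 ≤ a ∧ 1 ≤ b) := by
        rcases le_or_gt a 1 with hA | hA
        · rcases le_or_gt b 1 with hB | hB
          · exact Or.inl ⟨hA, hB⟩
          · exact Or.inr ⟨h2 hB, hB.le⟩
        · exact Or.inr ⟨hA.le, h1 hA⟩
      rcases hcase with ⟨hA, hB⟩ | ⟨hA, hB⟩
      · have hsub : S ⊆ Iic 0 := by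
          rintro c ⟨m, n, _, rfl⟩
          have l1 := Real.log_nonpos ha.le hA
          have l2 := Real.log_nonpos hb.le hB
          have p1 : (0:ℝ) ≤ m := Nat.cast_nonneg m
          have p2 : (0:ℝ) ≤ n := Nat.cast_nonneg n
          have := mul_nonpos_of_nonneg_of_nonpos p1 l1
          have := mul_nonpos_of_nonneg_of_nonpos p2 l2
          simp only [mem_Iic]
          linarith
        have : (1:ℝ) ∈ Iic 0 := closure_minimal hsub isClosed_Iic (hD 1)
        simp at this
        linarith
      · have hsub : S ⊆ Ici 0 := by
          rintro c ⟨m, n, _, rfl⟩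
          have l1 := Real.log_nonneg hA
          have l2 := Real.log_nonneg hB
          have p1 : (0:ℝ) ≤ m := Nat.cast_nonneg m
          have p2 : (0:ℝ) ≤ n := Nat.cast_nonneg n
          have := mul_nonneg p1 l1
          have := mul_nonneg p2 l2
          simp only [mem_Ici]
          linarith
        have : (-1:ℝ) ∈ Ici 0 := closure_minimal hsub isClosed_Ici (hD (-1))
        simp at this
        linarith
    refine ⟨hsigns, ?_⟩
    intro hrat
    have hα : Real.log a ≠ 0 := by
      rcases hsigns with ⟨h1, _⟩ | ⟨_, h2⟩
      · exact (Real.log_pos h1).ne'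
      · exact (Real.log_neg ha h2).ne
    obtain ⟨q, hq⟩ := hrat
    have hβ : Real.log b = (q:ℝ) * Real.log a := by
      rw [eq_comm, div_eq_iff hα] at hq
      exact hq
    have hden : ((q.den:ℕ):ℝ) ≠ 0 := by
      exact_mod_cast q.den_nz
    have hc0 : Real.log a / q.den ≠ 0 := div_ne_zero hα hden
    have hqd : (q:ℝ) * q.den = q.num := by
      rw [Rat.cast_def]
      field_simp
    have hrep : ∀ c ∈ S, ∃ k : ℤ, c = k * (Real.log a / q.den) := by
      rintro c ⟨m, n, _, rfl⟩
      refine ⟨m * q.den + n * q.num, ?_⟩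
      rw [hβ]
      field_simp
      push_cast
      linear_combination (n:ℝ) * hqd
    have hhalf := hD (Real.log a / q.den / 2)
    rw [Metric.mem_closure_iff] at hhalf
    obtain ⟨c, hcS, hdist⟩ := hhalf (|Real.log a / q.den| / 2) (by positivity)
    obtain ⟨k, rfl⟩ := hrep c hcS
    rw [Real.dist_eq] at hdist
    have h5 : |Real.log a / q.den / 2 - k * (Real.log a / q.den)|
        = |Real.log a / q.den| * |1/2 - (k:ℝ)| := by
      rw [← abs_mul]; congr 1; ring
    have h6 : (1:ℝ)/2 ≤ |1/2 - (k:ℝ)| := by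
      rcases le_or_gt k 0 with hk | hk
      · have : (k:ℝ) ≤ 0 := by exact_mod_cast hk
        rw [abs_of_nonneg (by linarith)]; linarith
      · have : (1:ℝ) ≤ k := by exact_mod_cast hk
        rw [abs_of_nonpos (by linarith)]
        linarith
    have h7 : 0 < |Real.log a / q.den| := abs_pos.mpr hc0
    nlinarith
  · rintro ⟨hsg | hsg, hirr⟩
    · exact dense_semigroup _ _ (Real.log_pos hsg.1) (Real.log_neg hb hsg.2) hirr
    · have hirr' : Irrational (Real.log a / Real.log b) := by
        have := hirr.inv
        rwa [inv_div] at this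
      have hD := dense_semigroup _ _ (Real.log_pos hsg.1) (Real.log_neg ha hsg.2) hirr'
      have hseteq : {c : ℝ | ∃ m n : ℕ, 1 ≤ m + n ∧ c = m * Real.log b + n * Real.log a}
          = S := by
        ext c
        constructor <;> rintro ⟨m, n, h, rfl⟩ <;> exact ⟨n, m, by omega, by ring⟩
      rwa [hseteq] at hD
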